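/- Suppose Φ(A, B) is a property of pairs of subsets of a Polish space X which is hereditary (Φ(A,B) and A' ⊆ A, B' ⊆ B imply Φ(A',B')), continuous upward in the second variable (Φ(A, B_n) for an increasing sequence B_n with union B implies Φ(A,B)), and Π^1_1 on Σ^1_1. If D_0 ⊆ X is Σ^1_1 and Φ(D_0, X \ D_0) holds, then there is a Borel (Δ^1_1) set D ⊇ D_0 with Φ(D, X \ D). -/

import Mathlib

open MeasureTheory

namespace SecondReflectionAux

open MeasureTheory Set

/-- proper suffix -/
def PSuf (s t : List ℕ) : Prop := s <:+ t ∧ s ≠ t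

lemma PSuf.length_lt {s t : List ℕ} (h : PSuf s t) : s.length < t.length :=
  lt_of_le_of_ne h.1.length_le fun hl => h.2 (h.1.eq_of_length hl)

lemma PSuf.trans {s t u : List ℕ} (h1 : PSuf s t) (h2 : PSuf t u) : PSuf s u := by
  refine ⟨h1.1.trans h2.1, fun h => ?_⟩
  subst h
  exact absurd (h1.length_lt.trans h2.length_lt) (lt_irrefl _)

lemma PSuf.of_cons {n : ℕ} {s : List ℕ} : PSuf s (n :: s) :=
  ⟨List.suffix_cons n s, fun h => by simpa using congrArg List.length h⟩

lemma psuf_nil {s : List ℕ} (h : s ≠ []) : PSuf [] s := ⟨List.nil_suffix, fun h' => h h'.symm⟩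

lemma psuf_cons_iff {s t : List ℕ} {n : ℕ} :
    PSuf s (n :: t) ↔ s = t ∨ PSuf s t := by
  constructor
  · rintro ⟨h1, h2⟩
    rcases List.suffix_cons_iff.1 h1 with h | h
    · exact absurd h h2
    · rcases eq_or_ne s t with h' | h'
      · exact Or.inl h'
      · exact Or.inr ⟨h, h'⟩
  · rintro (rfl | h)
    · exact PSuf.of_cons
    · exact h.trans PSuf.of_cons

/-- trees: suffix-closed sets of (reversed) finite sequences -/
def IsTree (T : Set (List ℕ)) : Prop := ∀ ⦃s t : List ℕ⦄, s <:+ t → t ∈ T → s ∈ T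

lemma IsTree.nil_mem {T : Set (List ℕ)} (hT : IsTree T) {s : List ℕ} (hs : s ∈ T) : [] ∈ T :=
  hT List.nil_suffix hs

/-- the child/descendant relation on a tree: `rel T a b` iff `a` is a proper extension of `b`,
both in `T`. -/
def rel (T : Set (List ℕ)) (a b : List ℕ) : Prop := PSuf b a ∧ a ∈ T ∧ b ∈ T

lemma no_descend {α : Type*} {r : α → α → Prop} (wf : WellFounded r) (f : ℕ → α)
    (hf : ∀ n, r (f (n + 1)) (f n)) : False := by
  have H : ∀ a, ∀ n, f n = a → False := by
    intro a
    induction a using WellFounded.induction wf with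
    | _ a ih =>
      intro n hn
      exact ih (f (n + 1)) (hn ▸ hf n) (n + 1) rfl
  exact H (f 0) 0 rfl

lemma descend_of_not_wf {α : Type*} {r : α → α → Prop} (h : ¬ WellFounded r) :
    ∃ f : ℕ → α, ∀ n, r (f (n + 1)) (f n) := by
  have h1 : ∃ a, ¬ Acc r a := by
    by_contra hc
    push_neg at hc
    exact h ⟨hc⟩
  obtain ⟨a0, ha0⟩ := h1
  have step : ∀ a, ¬ Acc r a → ∃ b, r b a ∧ ¬ Acc r b := by
    intro a ha
    by_contra hc
    push_neg at hc
    exact ha (Acc.intro a fun b hb => hc b hb)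
  choose g hg1 hg2 using step
  let F : ℕ → {a : α // ¬ Acc r a} := fun n =>
    Nat.rec ⟨a0, ha0⟩ (fun _ p => ⟨g p.1 p.2, hg2 p.1 p.2⟩) n
  exact ⟨fun n => (F n).1, fun n => hg1 (F n).1 (F n).2⟩

lemma suffix_drop_eq {s t : List ℕ} (h : s <:+ t) {k : ℕ} (hk : k ≤ s.length) :
    s.drop (s.length - k) = t.drop (t.length - k) := by
  obtain ⟨p, rfl⟩ := h
  rw [List.length_append]
  have h1 : p.length + s.length - k = p.length + (s.length - k) := by omega
  rw [h1, List.drop_append]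
  rw [List.drop_eq_nil_of_le (as := p) (i := p.length + (s.length - k)) (by omega), List.nil_append, Nat.add_sub_cancel_left]

/-- From non-well-foundedness of a tree, extract an infinite branch, given as the sequence of
its initial segments (`b k` of length `k`). -/
lemma exists_chain_of_not_wf {T : Set (List ℕ)} (hT : IsTree T) (h : ¬ WellFounded (rel T)) :
    ∃ b : ℕ → List ℕ, (∀ k, b k ∈ T) ∧ (∀ k, (b k).length = k) ∧ ∀ k, b k = (b (k + 1)).tail := by
  obtain ⟨f, hf⟩ := descend_of_not_wf h
  have hmemT : ∀ n, f n ∈ T := fun n => (hf n).2.2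
  have hlen : ∀ n, n ≤ (f n).length := by
    intro n
    induction n with
    | zero => exact Nat.zero_le _
    | succ n ih => exact Nat.lt_of_le_of_lt ih (hf n).1.length_lt
  refine ⟨fun k => (f k).drop ((f k).length - k), ?_, ?_, ?_⟩
  · intro k
    exact hT (List.drop_suffix _ _) (hmemT k)
  · intro k
    rw [List.length_drop]
    have := hlen k
    omega
  · intro k
    dsimp only
    have hsuf : f k <:+ f (k + 1) := (hf k).1.1
    have h1 : (f k).drop ((f k).length - k) = (f (k+1)).drop ((f (k+1)).length - k) :=
      suffix_drop_eq hsuf (hlen k)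
    have h2 : ((f (k+1)).drop ((f (k+1)).length - (k+1))).tail
        = (f (k+1)).drop ((f (k+1)).length - k) := by
      rw [← List.drop_one, List.drop_drop]
      congr 1
      have := hlen (k+1)
      omega
    rw [h1, h2]


/-! ### cylinders and nodes -/

/-- `cylR s` is the cylinder of elements of `ℕ → ℕ` whose initial segment (in reversed coding)
is `s`. -/
def cylR : List ℕ → Set (ℕ → ℕ)
  | [] => univ
  | n :: s => {v | v ∈ cylR s ∧ v s.length = n}

/-- `nodeOf v k` is the length-`k` initial segment of `v`, in reversed coding. -/
def nodeOf (v : ℕ → ℕ) : ℕ → List ℕ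
  | 0 => []
  | k + 1 => v k :: nodeOf v k

@[simp] lemma length_nodeOf (v : ℕ → ℕ) (k : ℕ) : (nodeOf v k).length = k := by
  induction k with
  | zero => rfl
  | succ k ih => simp [nodeOf, ih]

lemma mem_cylR_nodeOf (v : ℕ → ℕ) (k : ℕ) : v ∈ cylR (nodeOf v k) := by
  induction k with
  | zero => trivial
  | succ k ih => exact ⟨ih, by rw [length_nodeOf]⟩

lemma eq_nodeOf_of_mem_cylR {v : ℕ → ℕ} : ∀ {s : List ℕ}, v ∈ cylR s → s = nodeOf v s.length := by
  intro s
  induction s with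
  | nil => intro _; rfl
  | cons n s ih =>
    rintro ⟨h1, h2⟩
    have := ih h1
    simp only [List.length_cons, nodeOf]
    rw [← this, ← h2]

lemma cylR_mono : ∀ {t s : List ℕ}, s <:+ t → cylR t ⊆ cylR s := by
  intro t
  induction t with
  | nil => intro s hs; rw [List.suffix_nil.1 hs]
  | cons n t ih =>
    intro s hs
    rcases List.suffix_cons_iff.1 hs with rfl | hs
    · exact subset_rfl
    · exact fun v hv => ih hs hv.1

lemma nodeOf_coord {v w : ℕ → ℕ} {k : ℕ} (h : nodeOf v k = nodeOf w k) :
    ∀ i < k, v i = w i := by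
  induction k with
  | zero => intro i hi; omega
  | succ k ih =>
    simp only [nodeOf, List.cons.injEq] at h
    intro i hi
    rcases Nat.lt_succ_iff_lt_or_eq.1 hi with hi | rfl
    · exact ih h.2 i hi
    · exact h.1

/-! ### ranks -/

noncomputable def rnk {α : Type*} {r : α → α → Prop} (wf : WellFounded r) (a : α) : Ordinal :=
  (wf.apply a).rank

lemma rnk_lt {α : Type*} {r : α → α → Prop} (wf : WellFounded r) {a b : α} (h : r a b) :
    rnk wf a < rnk wf b :=
  Acc.rank_lt_of_rel (wf.apply b) h

lemma rnk_eq {α : Type*} {r : α → α → Prop} (wf : WellFounded r) (a : α) :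
    rnk wf a = ⨆ b : {b // r b a}, Order.succ (rnk wf b.1) :=
  (wf.apply a).rank_eq

lemma exists_child_rank {α : Type*} {r : α → α → Prop} (wf : WellFounded r) {a : α} {β : Ordinal}
    (h : β < rnk wf a) : ∃ b, r b a ∧ β ≤ rnk wf b := by
  rw [rnk_eq, Ordinal.lt_iSup_iff] at h
  obtain ⟨⟨b, hb⟩, hlt⟩ := h
  exact ⟨b, hb, Order.lt_succ_iff.1 hlt⟩

lemma rnk_le_of_emb {T U : Set (List ℕ)} (wfT : WellFounded (rel T)) (wfU : WellFounded (rel U))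
    {h : List ℕ → List ℕ} (hmem : ∀ s ∈ T, h s ∈ U)
    (hmono : ∀ s t, s ∈ T → t ∈ T → PSuf s t → PSuf (h s) (h t)) :
    ∀ s, s ∈ T → rnk wfT s ≤ rnk wfU (h s) := by
  intro s
  induction s using WellFounded.induction wfT with
  | _ s ih =>
    intro hs
    rw [rnk_eq wfT s]
    refine Ordinal.iSup_le_iff.2 ?_
    rintro ⟨t, ht⟩
    have h1 : rnk wfT t ≤ rnk wfU (h t) := ih t ht ht.2.1
    have h2 : rel U (h t) (h s) := ⟨hmono s t hs ht.2.1 ht.1, hmem t ht.2.1, hmem s hs⟩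
    exact Order.succ_le_of_lt (lt_of_le_of_lt h1 (rnk_lt wfU h2))

/-! ### construction of embeddings -/

lemma exists_emb {P Q : Set (List ℕ)} (hP : IsTree P)
    (wfP : WellFounded (rel P)) (wfQ : WellFounded (rel Q))
    {q₀ : List ℕ} (hq₀ : q₀ ∈ Q) (hrk : rnk wfP [] ≤ rnk wfQ q₀) :
    ∃ h : List ℕ → List ℕ, h [] = q₀ ∧ (∀ s ∈ P, h s ∈ Q) ∧
      ∀ s t, s ∈ P → t ∈ P → PSuf s t → PSuf (h s) (h t) := by
  classical
  let next : List ℕ → List ℕ → List ℕ := fun s q =>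
    if hc : ∃ u, rel Q u q ∧ rnk wfP s ≤ rnk wfQ u then hc.choose else q
  have next_spec : ∀ s q, (∃ u, rel Q u q ∧ rnk wfP s ≤ rnk wfQ u) →
      rel Q (next s q) q ∧ rnk wfP s ≤ rnk wfQ (next s q) := by
    intro s q hc
    simp only [next, dif_pos hc]
    exact hc.choose_spec
  let h : List ℕ → List ℕ := fun s => List.rec q₀ (fun n s' ihv => next (n :: s') ihv) s
  have hnil : h [] = q₀ := rfl
  have hcons : ∀ (n : ℕ) (s : List ℕ), h (n :: s) = next (n :: s) (h s) := fun n s => rfl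
  have key : ∀ s, s ∈ P → h s ∈ Q ∧ rnk wfP s ≤ rnk wfQ (h s) := by
    intro s
    induction s with
    | nil => intro _; rw [hnil]; exact ⟨hq₀, hrk⟩
    | cons n s' ih =>
      intro hns
      have hs' : s' ∈ P := hP (List.suffix_cons n s') hns
      obtain ⟨ihQ, ihle⟩ := ih hs'
      have hlt : rnk wfP (n :: s') < rnk wfQ (h s') :=
        lt_of_lt_of_le (rnk_lt wfP ⟨PSuf.of_cons, hns, hs'⟩) ihle
      obtain ⟨u, hu1, hu2⟩ := exists_child_rank wfQ hlt
      have hc := next_spec (n :: s') (h s') ⟨u, hu1, hu2⟩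
      rw [hcons]
      exact ⟨hc.1.2.1, hc.2⟩
  have step : ∀ (n : ℕ) (s : List ℕ), (n :: s) ∈ P → PSuf (h s) (h (n :: s)) := by
    intro n s hns
    have hs : s ∈ P := hP (List.suffix_cons n s) hns
    obtain ⟨ihQ, ihle⟩ := key s hs
    have hlt : rnk wfP (n :: s) < rnk wfQ (h s) :=
      lt_of_lt_of_le (rnk_lt wfP ⟨PSuf.of_cons, hns, hs⟩) ihle
    obtain ⟨u, hu1, hu2⟩ := exists_child_rank wfQ hlt
    have hc := next_spec (n :: s) (h s) ⟨u, hu1, hu2⟩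
    rw [hcons]
    exact hc.1.1
  refine ⟨h, hnil, fun s hs => (key s hs).1, ?_⟩
  intro s t hs ht hst
  induction t with
  | nil => exact absurd hst.length_lt (by simp)
  | cons n t' iht =>
    have ht' : t' ∈ P := hP (List.suffix_cons n t') ht
    rcases psuf_cons_iff.1 hst with rfl | hst'
    · exact step n s ht
    · exact (iht ht' hst').trans (step n t' ht)

/-! ### embeddings between trees -/

/-- there is an order-preserving map from `S` to `U` which is strict at the root. -/
def StrE (S U : Set (List ℕ)) : Prop :=
  ∃ h : List ℕ → List ℕ, (∀ s ∈ S, h s ∈ U) ∧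
    (∀ s t, s ∈ S → t ∈ S → PSuf s t → PSuf (h s) (h t)) ∧
    ([] ∈ S → PSuf [] (h []))

/-- there is an order-preserving map from `S` to `U`. -/
def NSE (S U : Set (List ℕ)) : Prop :=
  ∃ h : List ℕ → List ℕ, (∀ s ∈ S, h s ∈ U) ∧
    ∀ s t, s ∈ S → t ∈ S → PSuf s t → PSuf (h s) (h t)

lemma wf_of_NSE {S U : Set (List ℕ)} (h : NSE S U) (wfU : WellFounded (rel U)) :
    WellFounded (rel S) := by
  obtain ⟨h, h1, h2⟩ := h
  have : Subrelation (rel S) (InvImage (rel U) h) := by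
    rintro a b ⟨hab, ha, hb⟩
    exact ⟨h2 b a hb ha hab, h1 a ha, h1 b hb⟩
  exact Subrelation.wf this (InvImage.wf h wfU)

lemma StrE.nse {S U : Set (List ℕ)} (h : StrE S U) : NSE S U := by
  obtain ⟨h, h1, h2, _⟩ := h
  exact ⟨h, h1, h2⟩

/-- L1: a root-strict embedding increases the rank of the root. -/
lemma rank_lt_of_StrE {S U : Set (List ℕ)} (hU : IsTree U)
    (wfS : WellFounded (rel S)) (wfU : WellFounded (rel U))
    (hS0 : [] ∈ S) (e : StrE S U) : rnk wfS [] < rnk wfU [] := by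
  obtain ⟨h, h1, h2, h3⟩ := e
  have hle : rnk wfS [] ≤ rnk wfU (h []) := rnk_le_of_emb wfS wfU h1 h2 [] hS0
  have hmem : h [] ∈ U := h1 [] hS0
  have : rel U (h []) [] := ⟨h3 hS0, hmem, hU.nil_mem hmem⟩
  exact lt_of_le_of_lt hle (rnk_lt wfU this)

/-- L3: an embedding bounds the rank of the root. -/
lemma rank_le_of_NSE {S U : Set (List ℕ)} (hU : IsTree U)
    (wfS : WellFounded (rel S)) (wfU : WellFounded (rel U))
    (hS0 : [] ∈ S) (e : NSE S U) : rnk wfS [] ≤ rnk wfU [] := by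
  obtain ⟨h, h1, h2⟩ := e
  have hle : rnk wfS [] ≤ rnk wfU (h []) := rnk_le_of_emb wfS wfU h1 h2 [] hS0
  have hmem : h [] ∈ U := h1 [] hS0
  rcases eq_or_ne (h []) [] with h0 | h0
  · rwa [h0] at hle
  · exact hle.trans (rnk_lt wfU ⟨psuf_nil h0, hmem, hU.nil_mem hmem⟩).le

/-- L2: rank inequality gives a root-strict embedding. -/
lemma StrE_of_rank_lt {S U : Set (List ℕ)} (hS : IsTree S)
    (wfS : WellFounded (rel S)) (wfU : WellFounded (rel U))
    (hlt : rnk wfS [] < rnk wfU []) : StrE S U := by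
  obtain ⟨q₀, hq₀, hq₀rk⟩ := exists_child_rank wfU hlt
  obtain ⟨h, hnil, h1, h2⟩ := exists_emb hS wfS wfU hq₀.2.1 hq₀rk
  exact ⟨h, h1, h2, fun _ => hnil ▸ hq₀.1⟩

/-- L4: rank inequality gives an embedding. -/
lemma NSE_of_rank_le {S U : Set (List ℕ)} (hS : IsTree S)
    (wfS : WellFounded (rel S)) (wfU : WellFounded (rel U))
    (hU0 : [] ∈ U) (hle : rnk wfS [] ≤ rnk wfU []) : NSE S U := by
  obtain ⟨h, _, h1, h2⟩ := exists_emb hS wfS wfU hU0 hle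
  exact ⟨h, h1, h2⟩

/-! ### the tree attached to a continuous function -/

section TreeOfFunction

variable {X : Type*} [TopologicalSpace X] [PolishSpace X] {f : (ℕ → ℕ) → X}

/-- the Luzin–Sierpiński tree of `x` relative to `f`. -/
def Tr (f : (ℕ → ℕ) → X) (x : X) : Set (List ℕ) := {s | x ∈ closure (f '' cylR s)}

lemma isTree_Tr (x : X) : IsTree (Tr f x) := fun s t hst ht =>
  closure_mono (image_mono (f := f) (cylR_mono hst)) ht

lemma not_wf_of_mem_range {x : X} (hx : x ∈ range f) : ¬ WellFounded (rel (Tr f x)) := by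
  obtain ⟨v, rfl⟩ := hx
  intro wf
  have hmem : ∀ k, nodeOf v k ∈ Tr f (f v) := fun k =>
    subset_closure (mem_image_of_mem f (mem_cylR_nodeOf v k))
  exact no_descend wf (fun k => nodeOf v k) fun n => ⟨PSuf.of_cons, hmem (n+1), hmem n⟩

lemma mem_range_of_not_wf (hf : Continuous f) {x : X} (h : ¬ WellFounded (rel (Tr f x))) :
    x ∈ range f := by
  letI := TopologicalSpace.upgradeIsCompletelyMetrizable X
  obtain ⟨b, hbT, hblen, hbtail⟩ := exists_chain_of_not_wf (isTree_Tr x) h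
  set w : ℕ → ℕ := fun i => (b (i+1)).headI with hw
  have hnode : ∀ k, nodeOf w k = b k := by
    intro k
    induction k with
    | zero =>
      have : b 0 = [] := List.length_eq_zero_iff.1 (hblen 0)
      rw [this]; rfl
    | succ k ih =>
      have hlen : (b (k+1)).length = k+1 := hblen (k+1)
      have hne : b (k+1) ≠ [] := by
        intro hb; rw [hb] at hlen; simp at hlen
      show w k :: nodeOf w k = b (k+1)
      rw [ih, hbtail k]
      exact List.cons_head!_tail hne
  have hcl : ∀ k, x ∈ closure (f '' cylR (nodeOf w k)) := fun k => by
    rw [hnode k]; exact hbT k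
  have hex : ∀ k : ℕ, ∃ v, v ∈ cylR (nodeOf w k) ∧ dist x (f v) < 1/(k+1) := by
    intro k
    have := Metric.mem_closure_iff.1 (hcl k) (1/(k+1)) (by positivity)
    obtain ⟨y, ⟨v, hv, rfl⟩, hy⟩ := this
    exact ⟨v, hv, hy⟩
  choose v hv1 hv2 using hex
  have hvw : Filter.Tendsto v Filter.atTop (nhds w) := by
    rw [tendsto_pi_nhds]
    intro i
    refine Filter.Tendsto.congr' ?_ (tendsto_const_nhds (x := w i))
    filter_upwards [Filter.eventually_ge_atTop (i+1)] with k hk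
    have h1 : nodeOf w k = nodeOf (v k) k := by
      have := eq_nodeOf_of_mem_cylR (hv1 k)
      rwa [length_nodeOf] at this
    exact nodeOf_coord h1 i (by omega)
  have h1 : Filter.Tendsto (fun k => f (v k)) Filter.atTop (nhds (f w)) :=
    (hf.tendsto w).comp hvw
  have h2 : Filter.Tendsto (fun k => f (v k)) Filter.atTop (nhds x) := by
    rw [tendsto_iff_dist_tendsto_zero]
    refine squeeze_zero (g := fun k : ℕ => 1/(k+1)) (fun k => dist_nonneg) (fun k => ?_) ?_
    · exact le_of_lt (by rw [dist_comm]; exact hv2 k)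
    · exact tendsto_one_div_add_atTop_nhds_zero_nat
  exact ⟨w, (tendsto_nhds_unique h2 h1).symm⟩

lemma mem_range_iff_not_wf (hf : Continuous f) {x : X} :
    x ∈ range f ↔ ¬ WellFounded (rel (Tr f x)) :=
  ⟨not_wf_of_mem_range, mem_range_of_not_wf hf⟩

end TreeOfFunction

/-! ### analyticity of embedding sets -/

section Analytic

variable {Z : Type*} [TopologicalSpace Z] [PolishSpace Z] [MeasurableSpace Z] [BorelSpace Z]

/-- decoding a function `List ℕ → List ℕ` from an element of `ℕ → ℕ`. -/
def dec (c : ℕ → ℕ) (s : List ℕ) : List ℕ := Denumerable.ofNat (List ℕ) (c (Encodable.encode s))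

lemma dec_eq_iff {c : ℕ → ℕ} {s t : List ℕ} :
    dec c s = t ↔ c (Encodable.encode s) = Encodable.encode t := by
  constructor
  · rintro rfl
    exact (Denumerable.encode_ofNat _).symm
  · intro h
    rw [dec, h, Denumerable.ofNat_encode]

lemma meas_code (m k : ℕ) : MeasurableSet {q : Z × (ℕ → ℕ) | q.2 m = k} := by
  have hm : Measurable (fun q : Z × (ℕ → ℕ) => q.2 m) :=
    (measurable_pi_apply m).comp measurable_snd
  exact hm (measurableSet_singleton k)

lemma meas_decProp (p : List ℕ → Prop) (s : List ℕ) :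
    MeasurableSet {q : Z × (ℕ → ℕ) | p (dec q.2 s)} := by
  have he : {q : Z × (ℕ → ℕ) | p (dec q.2 s)}
      = ⋃ (t : List ℕ) (_ : p t), {q : Z × (ℕ → ℕ) | q.2 (Encodable.encode s) = Encodable.encode t} := by
    ext q
    simp only [mem_iUnion, mem_setOf_eq]
    constructor
    · intro h
      exact ⟨dec q.2 s, h, dec_eq_iff.1 rfl⟩
    · rintro ⟨t, ht, h1⟩
      rwa [show dec q.2 s = t from dec_eq_iff.2 h1]
  rw [he]
  exact MeasurableSet.iUnion fun t => MeasurableSet.iUnion fun _ => meas_code _ _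

lemma meas_decMem (τ : Z → Set (List ℕ)) (hτ : ∀ s, MeasurableSet {z | s ∈ τ z}) (s : List ℕ) :
    MeasurableSet {q : Z × (ℕ → ℕ) | dec q.2 s ∈ τ q.1} := by
  have he : {q : Z × (ℕ → ℕ) | dec q.2 s ∈ τ q.1}
      = ⋃ t : List ℕ, ({q : Z × (ℕ → ℕ) | q.2 (Encodable.encode s) = Encodable.encode t}
          ∩ {q : Z × (ℕ → ℕ) | t ∈ τ q.1}) := by
    ext q
    simp only [mem_iUnion, mem_inter_iff, mem_setOf_eq]
    constructor
    · intro h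
      exact ⟨dec q.2 s, dec_eq_iff.1 rfl, h⟩
    · rintro ⟨t, h1, h2⟩
      rwa [show dec q.2 s = t from dec_eq_iff.2 h1]
  rw [he]
  exact MeasurableSet.iUnion fun t => (meas_code _ _).inter (measurable_fst (hτ t))

lemma meas_decPSuf (s t : List ℕ) :
    MeasurableSet {q : Z × (ℕ → ℕ) | PSuf (dec q.2 s) (dec q.2 t)} := by
  have he : {q : Z × (ℕ → ℕ) | PSuf (dec q.2 s) (dec q.2 t)}
      = ⋃ (a : List ℕ) (b : List ℕ) (_ : PSuf a b),
          ({q : Z × (ℕ → ℕ) | q.2 (Encodable.encode s) = Encodable.encode a}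
            ∩ {q : Z × (ℕ → ℕ) | q.2 (Encodable.encode t) = Encodable.encode b}) := by
    ext q
    simp only [mem_iUnion, mem_inter_iff, mem_setOf_eq]
    constructor
    · intro h
      exact ⟨dec q.2 s, dec q.2 t, h, dec_eq_iff.1 rfl, dec_eq_iff.1 rfl⟩
    · rintro ⟨a, b, hab, h1, h2⟩
      rwa [show dec q.2 s = a from dec_eq_iff.2 h1, show dec q.2 t = b from dec_eq_iff.2 h2]
  rw [he]
  exact MeasurableSet.iUnion fun a => MeasurableSet.iUnion fun b => MeasurableSet.iUnion fun _ =>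
    (meas_code _ _).inter (meas_code _ _)

lemma analytic_embSet (τ₁ τ₂ : Z → Set (List ℕ))
    (h₁ : ∀ s, MeasurableSet {z | s ∈ τ₁ z}) (h₂ : ∀ s, MeasurableSet {z | s ∈ τ₂ z})
    (strict : Bool) :
    AnalyticSet {z : Z | ∃ h : List ℕ → List ℕ, (∀ s ∈ τ₁ z, h s ∈ τ₂ z) ∧
      (∀ s t, s ∈ τ₁ z → t ∈ τ₁ z → PSuf s t → PSuf (h s) (h t)) ∧
      (strict = true → ([] ∈ τ₁ z → PSuf [] (h [])))} := by
  classical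
  set W : Set (Z × (ℕ → ℕ)) := {q | (∀ s ∈ τ₁ q.1, dec q.2 s ∈ τ₂ q.1) ∧
      (∀ s t, s ∈ τ₁ q.1 → t ∈ τ₁ q.1 → PSuf s t → PSuf (dec q.2 s) (dec q.2 t)) ∧
      (strict = true → ([] ∈ τ₁ q.1 → PSuf [] (dec q.2 [])))} with hWdef
  have e1 : ∀ s : List ℕ, MeasurableSet {q : Z × (ℕ → ℕ) | s ∈ τ₁ q.1 → dec q.2 s ∈ τ₂ q.1} := by
    intro s
    have : {q : Z × (ℕ → ℕ) | s ∈ τ₁ q.1 → dec q.2 s ∈ τ₂ q.1}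
        = {q : Z × (ℕ → ℕ) | s ∈ τ₁ q.1}ᶜ ∪ {q : Z × (ℕ → ℕ) | dec q.2 s ∈ τ₂ q.1} := by
      ext q
      simp [imp_iff_not_or]
    rw [this]
    exact ((measurable_fst (h₁ s)).compl).union (meas_decMem τ₂ h₂ s)
  have e2 : ∀ s t : List ℕ, MeasurableSet {q : Z × (ℕ → ℕ) |
      s ∈ τ₁ q.1 → t ∈ τ₁ q.1 → PSuf s t → PSuf (dec q.2 s) (dec q.2 t)} := by
    intro s t
    by_cases hst : PSuf s t
    · have : {q : Z × (ℕ → ℕ) | s ∈ τ₁ q.1 → t ∈ τ₁ q.1 → PSuf s t → PSuf (dec q.2 s) (dec q.2 t)}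
          = {q : Z × (ℕ → ℕ) | s ∈ τ₁ q.1}ᶜ ∪ ({q : Z × (ℕ → ℕ) | t ∈ τ₁ q.1}ᶜ
              ∪ {q : Z × (ℕ → ℕ) | PSuf (dec q.2 s) (dec q.2 t)}) := by
        ext q
        simp [hst, imp_iff_not_or]
      rw [this]
      exact ((measurable_fst (h₁ s)).compl).union
        (((measurable_fst (h₁ t)).compl).union (meas_decPSuf s t))
    · have : {q : Z × (ℕ → ℕ) | s ∈ τ₁ q.1 → t ∈ τ₁ q.1 → PSuf s t → PSuf (dec q.2 s) (dec q.2 t)}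
          = univ := by
        ext q
        simp [hst]
      rw [this]
      exact MeasurableSet.univ
  have e3 : MeasurableSet {q : Z × (ℕ → ℕ) | strict = true → ([] ∈ τ₁ q.1 → PSuf [] (dec q.2 []))} := by
    cases strict with
    | false =>
      have : {q : Z × (ℕ → ℕ) | false = true → ([] ∈ τ₁ q.1 → PSuf [] (dec q.2 []))} = univ := by
        ext q; simp
      rw [this]
      exact MeasurableSet.univ
    | true =>
      have : {q : Z × (ℕ → ℕ) | true = true → ([] ∈ τ₁ q.1 → PSuf [] (dec q.2 []))}
          = {q : Z × (ℕ → ℕ) | [] ∈ τ₁ q.1}ᶜ ∪ {q : Z × (ℕ → ℕ) | PSuf [] (dec q.2 [])} := by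
        ext q
        simp [imp_iff_not_or]
      rw [this]
      exact ((measurable_fst (h₁ [])).compl).union (meas_decProp (fun u => PSuf [] u) [])
  have hWmeas : MeasurableSet W := by
    have : W = (⋂ s : List ℕ, {q : Z × (ℕ → ℕ) | s ∈ τ₁ q.1 → dec q.2 s ∈ τ₂ q.1})
        ∩ ((⋂ (s : List ℕ) (t : List ℕ), {q : Z × (ℕ → ℕ) |
            s ∈ τ₁ q.1 → t ∈ τ₁ q.1 → PSuf s t → PSuf (dec q.2 s) (dec q.2 t)})
          ∩ {q : Z × (ℕ → ℕ) | strict = true → ([] ∈ τ₁ q.1 → PSuf [] (dec q.2 []))}) := by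
      ext q
      simp only [hWdef, mem_inter_iff, mem_iInter, mem_setOf_eq]
    rw [this]
    exact (MeasurableSet.iInter e1).inter
      ((MeasurableSet.iInter fun s => MeasurableSet.iInter (e2 s)).inter e3)
  have himg : {z : Z | ∃ h : List ℕ → List ℕ, (∀ s ∈ τ₁ z, h s ∈ τ₂ z) ∧
      (∀ s t, s ∈ τ₁ z → t ∈ τ₁ z → PSuf s t → PSuf (h s) (h t)) ∧
      (strict = true → ([] ∈ τ₁ z → PSuf [] (h [])))} = Prod.fst '' W := by
    ext z
    constructor
    · rintro ⟨h, hh1, hh2, hh3⟩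
      refine ⟨(z, fun n => Encodable.encode (h (Denumerable.ofNat (List ℕ) n))), ?_, rfl⟩
      have hdec : ∀ s, dec (fun n => Encodable.encode (h (Denumerable.ofNat (List ℕ) n))) s = h s := by
        intro s
        rw [dec]
        simp [Denumerable.ofNat_encode]
      refine ⟨fun s hs => ?_, fun s t hs ht hst => ?_, fun hstr h0 => ?_⟩
      · rw [hdec]; exact hh1 s hs
      · rw [hdec, hdec]; exact hh2 s t hs ht hst
      · rw [hdec]; exact hh3 hstr h0
    · rintro ⟨⟨z', c⟩, hq, rfl⟩
      exact ⟨dec c, hq.1, hq.2.1, hq.2.2⟩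
  rw [himg]
  exact hWmeas.analyticSet.image_of_continuous continuous_fst

end Analytic

/-! ### assembling: the first reflection theorem -/

lemma analytic_union {α : Type*} [TopologicalSpace α] {s t : Set α}
    (hs : AnalyticSet s) (ht : AnalyticSet t) : AnalyticSet (s ∪ t) := by
  have h1 : s ∪ t = ⋃ b : Bool, (if b then s else t) := by
    ext x
    simp only [mem_union, mem_iUnion, Bool.exists_bool, if_true, if_false]
    tauto
  rw [h1]
  exact AnalyticSet.iUnion fun b => by cases b <;> simpa

lemma analytic_univ_prod {X : Type*} [TopologicalSpace X] [PolishSpace X] {F : Set X}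
    (hF : AnalyticSet F) : AnalyticSet ((univ : Set X) ×ˢ F) := by
  rw [AnalyticSet] at hF
  rcases hF with rfl | ⟨g, hg, rfl⟩
  · rw [Set.prod_empty]
    exact analyticSet_empty
  · have h1 : (univ : Set X) ×ˢ range g = range (fun p : X × (ℕ → ℕ) => (p.1, g p.2)) := by
      ext p
      simp only [Set.mem_prod, mem_univ, true_and, mem_range, Prod.ext_iff]
      constructor
      · rintro ⟨w, hw⟩
        exact ⟨(p.1, w), rfl, hw⟩
      · rintro ⟨q, h1, h2⟩
        exact ⟨q.2, h2⟩
    rw [h1]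
    exact analyticSet_range_of_polishSpace (continuous_fst.prodMk (hg.comp continuous_snd))

lemma refl1 {X : Type} [TopologicalSpace X] [PolishSpace X] [MeasurableSpace X] [BorelSpace X]
    (Φ : Set X → Set X → Prop)
    (piOnSigma : ∀ (Y : Type) [TopologicalSpace Y] [PolishSpace Y],
      ∀ A B : Set (Y × X), AnalyticSet A → AnalyticSet B →
        AnalyticSet {y : Y | ¬ Φ {x | (y, x) ∈ A} {x | (y, x) ∈ B}})
    {F A : Set X} (hF : AnalyticSet F) (hA : AnalyticSet A) (hΦA : Φ A F) :
    ∃ B : Set X, MeasurableSet B ∧ A ⊆ B ∧ Φ B F := by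
  by_contra hno
  push_neg at hno
  rw [AnalyticSet] at hA
  rcases hA with rfl | ⟨f, hf, rfl⟩
  · exact hno ∅ MeasurableSet.empty subset_rfl hΦA
  have hmeas : ∀ s, MeasurableSet {x : X | s ∈ Tr f x} := fun s =>
    isClosed_closure.measurableSet
  -- the strict-embedding relation is analytic
  have hM : AnalyticSet {p : X × X | StrE (Tr f p.1) (Tr f p.2)} := by
    have h1 := analytic_embSet (Z := X × X) (fun p => Tr f p.1) (fun p => Tr f p.2)
      (fun s => measurable_fst (hmeas s)) (fun s => measurable_snd (hmeas s)) true
    have h2 : {p : X × X | StrE (Tr f p.1) (Tr f p.2)}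
        = {z : X × X | ∃ h : List ℕ → List ℕ, (∀ s ∈ Tr f z.1, h s ∈ Tr f z.2) ∧
            (∀ s t, s ∈ Tr f z.1 → t ∈ Tr f z.1 → PSuf s t → PSuf (h s) (h t)) ∧
            (true = true → ([] ∈ Tr f z.1 → PSuf [] (h [])))} := by
      ext p
      simp only [mem_setOf_eq, StrE, true_implies]
    rw [h2]
    exact h1
  set Aarg : Set (X × X) := {p : X × X | p.2 ∈ range f ∨ StrE (Tr f p.1) (Tr f p.2)} with hAargdef
  have hAargA : AnalyticSet Aarg := by
    have h1 : Aarg = ((univ : Set X) ×ˢ range f) ∪ {p : X × X | StrE (Tr f p.1) (Tr f p.2)} := by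
      ext p
      simp only [hAargdef, mem_setOf_eq, mem_union, Set.mem_prod, mem_univ, true_and]
    rw [h1]
    exact analytic_union (analytic_univ_prod (analyticSet_range_of_polishSpace hf)) hM
  have hS := piOnSigma X Aarg ((univ : Set X) ×ˢ F) hAargA (analytic_univ_prod hF)
  have hSeq : {y : X | ¬ Φ {x | (y, x) ∈ Aarg} {x | (y, x) ∈ (univ : Set X) ×ˢ F}}
      = {y : X | ¬ Φ (range f ∪ {x | StrE (Tr f y) (Tr f x)}) F} := by
    ext y
    have h1 : {x | (y, x) ∈ Aarg} = range f ∪ {x | StrE (Tr f y) (Tr f x)} := rfl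
    have h2 : {x | (y, x) ∈ (univ : Set X) ×ˢ F} = F := by
      ext x
      simp [Set.mem_prod]
    rw [mem_setOf_eq, mem_setOf_eq, h1, h2]
  rw [hSeq] at hS
  have hkey : {y : X | ¬ Φ (range f ∪ {x | StrE (Tr f y) (Tr f x)}) F} = (range f)ᶜ := by
    ext x₀
    simp only [mem_setOf_eq, mem_compl_iff]
    constructor
    · -- if the property fails then x₀ is not in the range
      intro hbad hx₀
      apply hbad
      have hsub : {x | StrE (Tr f x₀) (Tr f x)} ⊆ range f := by
        rintro y ⟨h, h1, h2, h3⟩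
        obtain ⟨v, rfl⟩ := hx₀
        have hmemv : ∀ k, nodeOf v k ∈ Tr f (f v) := fun k =>
          subset_closure (mem_image_of_mem f (mem_cylR_nodeOf v k))
        apply mem_range_of_not_wf hf
        intro wf
        refine no_descend wf (fun k => h (nodeOf v k)) ?_
        intro n
        exact ⟨h2 _ _ (hmemv n) (hmemv (n+1)) PSuf.of_cons,
          h1 _ (hmemv (n+1)), h1 _ (hmemv n)⟩
      have he : range f ∪ {x | StrE (Tr f x₀) (Tr f x)} = range f :=
        subset_antisymm (union_subset subset_rfl hsub) subset_union_left
      rw [he]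
      exact hΦA
    · -- if x₀ is not in the range then the property fails
      intro hx₀
      have wf0 : WellFounded (rel (Tr f x₀)) := by
        by_contra hw
        exact hx₀ (mem_range_of_not_wf hf hw)
      by_cases h0 : [] ∈ Tr f x₀
      · -- the tree of x₀ is nonempty
        have hMx₀ : AnalyticSet {x : X | StrE (Tr f x₀) (Tr f x)} := by
          have h1 := analytic_embSet (Z := X) (fun _ => Tr f x₀) (Tr f)
            (fun s => MeasurableSet.const _) hmeas true
          have h2 : {x : X | StrE (Tr f x₀) (Tr f x)}
              = {z : X | ∃ h : List ℕ → List ℕ, (∀ s ∈ Tr f x₀, h s ∈ Tr f z) ∧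
                  (∀ s t, s ∈ Tr f x₀ → t ∈ Tr f x₀ → PSuf s t → PSuf (h s) (h t)) ∧
                  (true = true → ([] ∈ Tr f x₀ → PSuf [] (h [])))} := by
            ext x
            simp only [mem_setOf_eq, StrE, true_implies]
          rw [h2]
          exact h1
        have hNSet : AnalyticSet {y : X | NSE (Tr f y) (Tr f x₀)} := by
          have h1 := analytic_embSet (Z := X) (Tr f) (fun _ => Tr f x₀)
            hmeas (fun s => MeasurableSet.const _) false
          have h2 : {y : X | NSE (Tr f y) (Tr f x₀)}
              = {z : X | ∃ h : List ℕ → List ℕ, (∀ s ∈ Tr f z, h s ∈ Tr f x₀) ∧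
                  (∀ s t, s ∈ Tr f z → t ∈ Tr f z → PSuf s t → PSuf (h s) (h t)) ∧
                  (false = true → ([] ∈ Tr f z → PSuf [] (h [])))} := by
            ext x
            simp only [mem_setOf_eq, NSE, Bool.false_eq_true, false_implies, and_true]
          rw [h2]
          exact h1
        set K := range f ∪ {x | StrE (Tr f x₀) (Tr f x)} with hKdef
        have hKc : Kᶜ = {y : X | NSE (Tr f y) (Tr f x₀)} := by
          ext y
          simp only [hKdef, mem_compl_iff, mem_union, mem_setOf_eq, not_or]
          constructor
          · rintro ⟨hy1, hy2⟩
            have wfy : WellFounded (rel (Tr f y)) := by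
              by_contra hw
              exact hy1 (mem_range_of_not_wf hf hw)
            by_cases hy0 : [] ∈ Tr f y
            · rcases le_or_gt (rnk wfy []) (rnk wf0 []) with hle | hlt
              · exact NSE_of_rank_le (isTree_Tr y) wfy wf0 h0 hle
              · exact absurd (StrE_of_rank_lt (isTree_Tr x₀) wf0 wfy hlt) hy2
            · exact ⟨fun _ => [], fun s hs => absurd ((isTree_Tr y).nil_mem hs) hy0,
                fun s t hs _ _ => absurd ((isTree_Tr y).nil_mem hs) hy0⟩
          · intro hnse
            have wfy : WellFounded (rel (Tr f y)) := wf_of_NSE hnse wf0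
            refine ⟨fun hy => not_wf_of_mem_range hy wfy, fun hstr => ?_⟩
            have hy0 : [] ∈ Tr f y := by
              obtain ⟨g, g1, g2, g3⟩ := hstr
              exact (isTree_Tr y).nil_mem (g1 [] h0)
            have hlt := rank_lt_of_StrE (isTree_Tr y) wf0 wfy h0 hstr
            have hle := rank_le_of_NSE (isTree_Tr x₀) wfy wf0 hy0 hnse
            exact absurd (lt_of_lt_of_le hlt hle) (lt_irrefl _)
        have hKA : AnalyticSet K := by
          rw [hKdef]
          exact analytic_union (analyticSet_range_of_polishSpace hf) hMx₀
        have hKm : MeasurableSet K := hKA.measurableSet_of_compl (by rw [hKc]; exact hNSet)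
        exact hno K hKm subset_union_left
      · -- the tree of x₀ is empty
        have he : {x : X | StrE (Tr f x₀) (Tr f x)} = univ := by
          ext y
          simp only [mem_setOf_eq, mem_univ, iff_true]
          exact ⟨id, fun s hs => absurd ((isTree_Tr x₀).nil_mem hs) h0,
            fun s t hs _ _ => absurd ((isTree_Tr x₀).nil_mem hs) h0, fun h => absurd h h0⟩
        rw [he, union_univ]
        exact hno univ MeasurableSet.univ (subset_univ _)
  rw [hkey] at hS
  have hAm : MeasurableSet (range f) :=
    (analyticSet_range_of_polishSpace hf).measurableSet_of_compl hS
  exact hno (range f) hAm subset_rfl hΦA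

end SecondReflectionAux

open Set SecondReflectionAux

/-- The second reflection theorem (Kechris, 35.16).  If `Φ(A,B)` is hereditary,
continuous upward in the second variable, and `Π¹₁ on Σ¹₁` (for every Polish `Y`
and analytic `A, B ⊆ Y × X`, the set `{y | Φ (A_y) (B_y)}` is coanalytic, i.e.
its complement is analytic), then for every analytic `D₀` with `Φ D₀ D₀ᶜ` there
is a Borel `D ⊇ D₀` with `Φ D Dᶜ`. -/
theorem second_reflection
    (X : Type) [TopologicalSpace X] [PolishSpace X]
    [MeasurableSpace X] [BorelSpace X]
    (Φ : Set X → Set X → Prop)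
    (hered : ∀ A B A' B' : Set X, Φ A B → A' ⊆ A → B' ⊆ B → Φ A' B')
    (cont : ∀ (A : Set X) (B : ℕ → Set X), Monotone B →
      (∀ n, Φ A (B n)) → Φ A (⋃ n, B n))
    (piOnSigma : ∀ (Y : Type) [TopologicalSpace Y] [PolishSpace Y],
      ∀ A B : Set (Y × X), AnalyticSet A → AnalyticSet B →
        AnalyticSet {y : Y | ¬ Φ {x | (y, x) ∈ A} {x | (y, x) ∈ B}})
    (D₀ : Set X) (hD₀ : AnalyticSet D₀) (hΦ₀ : Φ D₀ D₀ᶜ) :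
    ∃ D : Set X, MeasurableSet D ∧ D₀ ⊆ D ∧ Φ D Dᶜ := by
  classical
  have step : ∀ E : Set X, MeasurableSet E → D₀ ⊆ E →
      ∃ E' : Set X, MeasurableSet E' ∧ D₀ ⊆ E' ∧ E' ⊆ E ∧ Φ E' Eᶜ := by
    intro E hE hDE
    have hFc : AnalyticSet Eᶜ := hE.compl.analyticSet
    have hΦ : Φ D₀ Eᶜ := hered D₀ D₀ᶜ D₀ Eᶜ hΦ₀ subset_rfl (compl_subset_compl.2 hDE)
    obtain ⟨B, hBm, hDB, hBΦ⟩ := refl1 Φ piOnSigma hFc hD₀ hΦ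
    exact ⟨B ∩ E, hBm.inter hE, subset_inter hDB hDE, inter_subset_right,
      hered B Eᶜ (B ∩ E) Eᶜ hBΦ inter_subset_left subset_rfl⟩
  choose g hg1 hg2 hg3 hg4 using step
  let Eseq : ℕ → {E : Set X // MeasurableSet E ∧ D₀ ⊆ E} := fun n =>
    Nat.rec ⟨univ, MeasurableSet.univ, subset_univ _⟩
      (fun _ p => ⟨g p.1 p.2.1 p.2.2, hg1 p.1 p.2.1 p.2.2, hg2 p.1 p.2.1 p.2.2⟩) n
  let E : ℕ → Set X := fun n => (Eseq n).1
  have hEm : ∀ n, MeasurableSet (E n) := fun n => (Eseq n).2.1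
  have hED : ∀ n, D₀ ⊆ E n := fun n => (Eseq n).2.2
  have hEdec : ∀ n, E (n+1) ⊆ E n := fun n => hg3 (E n) (hEm n) (hED n)
  have hEΦ : ∀ n, Φ (E (n+1)) (E n)ᶜ := fun n => hg4 (E n) (hEm n) (hED n)
  refine ⟨⋂ n, E n, MeasurableSet.iInter hEm, subset_iInter hED, ?_⟩
  have hmono : Monotone (fun n => (E n)ᶜ) :=
    monotone_nat_of_le_succ fun n => compl_subset_compl.2 (hEdec n)
  have hΦn : ∀ n, Φ (⋂ m, E m) (E n)ᶜ := fun n =>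
    hered (E (n+1)) (E n)ᶜ _ _ (hEΦ n) (iInter_subset E (n+1)) subset_rfl
  have hfin := cont (⋂ m, E m) (fun n => (E n)ᶜ) hmono hΦn
  rwa [← compl_iInter] at hfin
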